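/- Edge-form setting: let c₀⁺, c₁⁺, c₂⁺ : [0,1] → ℝ be C² with the i-th derivative of c_j⁺ at 0 equal to δ_{ij} for 0 ≤ i, j ≤ 2; let c₀⁻, c₁⁻ : [0,1] → ℝ be C¹ with the i-th derivative of c_j⁻ at 0 equal to δ_{ij} for 0 ≤ i, j ≤ 1; let c₀, c₁, b₁ : [0,1] → ℝ be C¹ with c₀(0) = 1, c₀′(0) = 0, c₁(0) = 0, c₁′(0) = 1, b₁(0) = 0 and b₁′(0) = λ ≠ 0; and let α, β : [0,1] → ℝ be C¹ with α(0) ≠ 0. For d = (d₀₀, d₀₁, d₀₂, d₁₀, d₁₁) ∈ ℝ⁵ define f_d(ξ₁,ξ₂) = Σ_{j=0}^{2} d₀ⱼ (c_j⁺(ξ₂)c₀(ξ₁) − β(ξ₂)(c_j⁺)′(ξ₂)c₁(ξ₁)) + Σ_{j=0}^{1} d₁ⱼ α(ξ₂)c_j⁻(ξ₂)b₁(ξ₁). Then f_d(0,0) = d₀₀, ∂₂f_d(0,0) = d₀₁, ∂₂²f_d(0,0) = d₀₂, ∂₁f_d(0,0) = λα(0)d₁₀ − β(0)d₀₁, and ∂₁∂₂f_d(0,0)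 = λα(0)d₁₁ − β(0)d₀₂ + λα′(0)d₁₀ − β′(0)d₀₁; consequently, for every prescribed vector of values (f(0,0), ∂₂f(0,0), ∂₂²f(0,0), ∂₁f(0,0), ∂₁∂₂f(0,0)) ∈ ℝ⁵ there exists a unique d ∈ ℝ⁵ realizing it. -/

import Mathlib

/-- Partial derivative with respect to the first argument. -/
noncomputable def pd1 {E : Type*} [NormedAddCommGroup E] [NormedSpace ℝ E]
    (f : ℝ × ℝ → E) (x : ℝ × ℝ) : E := deriv (fun s => f (s, x.2)) x.1

/-- Partial derivative with respect to the second argument. -/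
noncomputable def pd2 {E : Type*} [NormedAddCommGroup E] [NormedSpace ℝ E]
    (f : ℝ × ℝ → E) (x : ℝ × ℝ) : E := deriv (fun s => f (x.1, s)) x.2

/-- The generic element `f_d` of the five-dimensional vertex-edge space, with
coefficients `d = (d₀₀, d₀₁, d₀₂, d₁₀, d₁₁)`. -/
noncomputable def fEdge (cp₀ cp₁ cp₂ cm₀ cm₁ c₀ c₁ b₁ α β : ℝ → ℝ)
    (d : ℝ × ℝ × ℝ × ℝ × ℝ) : ℝ × ℝ → ℝ := fun ξ =>
  d.1 * (cp₀ ξ.2 * c₀ ξ.1 - β ξ.2 * deriv cp₀ ξ.2 * c₁ ξ.1)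
  + d.2.1 * (cp₁ ξ.2 * c₀ ξ.1 - β ξ.2 * deriv cp₁ ξ.2 * c₁ ξ.1)
  + d.2.2.1 * (cp₂ ξ.2 * c₀ ξ.1 - β ξ.2 * deriv cp₂ ξ.2 * c₁ ξ.1)
  + d.2.2.2.1 * (α ξ.2 * cm₀ ξ.2 * b₁ ξ.1)
  + d.2.2.2.2 * (α ξ.2 * cm₁ ξ.2 * b₁ ξ.1)

/-- The Hermite data of a function at the corner `(0,0)`:
`(f(0,0), ∂₂f(0,0), ∂₂²f(0,0), ∂₁f(0,0), ∂₁∂₂f(0,0))`. -/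
noncomputable def edgeData (f : ℝ × ℝ → ℝ) : ℝ × ℝ × ℝ × ℝ × ℝ :=
  (f (0, 0), pd2 f (0, 0), pd2 (pd2 f) (0, 0), pd1 f (0, 0), pd1 (pd2 f) (0, 0))

/-- In the edge-form setting, the derivatives of `f_d` at `(0,0)` are given by the
stated explicit formulas in `d`, and consequently every prescribed vector of Hermite
data at `(0,0)` is attained by a unique `d ∈ ℝ⁵`. -/
theorem stmt12 (cp₀ cp₁ cp₂ cm₀ cm₁ c₀ c₁ b₁ α β : ℝ → ℝ)
    (hcp₀ : ContDiff ℝ 2 cp₀) (hcp₁ : ContDiff ℝ 2 cp₁) (hcp₂ : ContDiff ℝ 2 cp₂)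
    (hcp₀0 : cp₀ 0 = 1) (hcp₀1 : deriv cp₀ 0 = 0) (hcp₀2 : deriv (deriv cp₀) 0 = 0)
    (hcp₁0 : cp₁ 0 = 0) (hcp₁1 : deriv cp₁ 0 = 1) (hcp₁2 : deriv (deriv cp₁) 0 = 0)
    (hcp₂0 : cp₂ 0 = 0) (hcp₂1 : deriv cp₂ 0 = 0) (hcp₂2 : deriv (deriv cp₂) 0 = 1)
    (hcm₀ : ContDiff ℝ 1 cm₀) (hcm₁ : ContDiff ℝ 1 cm₁)
    (hcm₀0 : cm₀ 0 = 1) (hcm₀1 : deriv cm₀ 0 = 0)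
    (hcm₁0 : cm₁ 0 = 0) (hcm₁1 : deriv cm₁ 0 = 1)
    (hc₀ : ContDiff ℝ 1 c₀) (hc₁ : ContDiff ℝ 1 c₁) (hb₁ : ContDiff ℝ 1 b₁)
    (hc₀0 : c₀ 0 = 1) (hc₀1 : deriv c₀ 0 = 0)
    (hc₁0 : c₁ 0 = 0) (hc₁1 : deriv c₁ 0 = 1)
    (lam : ℝ) (hlam : lam ≠ 0) (hb₁0 : b₁ 0 = 0) (hb₁1 : deriv b₁ 0 = lam)
    (hα : ContDiff ℝ 1 α) (hβ : ContDiff ℝ 1 β) (hα0 : α 0 ≠ 0) :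
    (∀ d : ℝ × ℝ × ℝ × ℝ × ℝ,
      fEdge cp₀ cp₁ cp₂ cm₀ cm₁ c₀ c₁ b₁ α β d (0, 0) = d.1 ∧
      pd2 (fEdge cp₀ cp₁ cp₂ cm₀ cm₁ c₀ c₁ b₁ α β d) (0, 0) = d.2.1 ∧
      pd2 (pd2 (fEdge cp₀ cp₁ cp₂ cm₀ cm₁ c₀ c₁ b₁ α β d)) (0, 0) = d.2.2.1 ∧
      pd1 (fEdge cp₀ cp₁ cp₂ cm₀ cm₁ c₀ c₁ b₁ α β d) (0, 0)
        = lam * α 0 * d.2.2.2.1 - β 0 * d.2.1 ∧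
      pd1 (pd2 (fEdge cp₀ cp₁ cp₂ cm₀ cm₁ c₀ c₁ b₁ α β d)) (0, 0)
        = lam * α 0 * d.2.2.2.2 - β 0 * d.2.2.1
          + lam * deriv α 0 * d.2.2.2.1 - deriv β 0 * d.2.1) ∧
    (∀ w : ℝ × ℝ × ℝ × ℝ × ℝ,
      ∃! d : ℝ × ℝ × ℝ × ℝ × ℝ,
        edgeData (fEdge cp₀ cp₁ cp₂ cm₀ cm₁ c₀ c₁ b₁ α β d) = w) := by
  -- basic differentiability facts
  have h2 : (2 : WithTop ℕ∞) = 1 + 1 := by norm_num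
  have hdcp₀ : ∀ x : ℝ, HasDerivAt cp₀ (deriv cp₀ x) x :=
    fun x => (hcp₀.differentiable two_ne_zero x).hasDerivAt
  have hdcp₁ : ∀ x : ℝ, HasDerivAt cp₁ (deriv cp₁ x) x :=
    fun x => (hcp₁.differentiable two_ne_zero x).hasDerivAt
  have hdcp₂ : ∀ x : ℝ, HasDerivAt cp₂ (deriv cp₂ x) x :=
    fun x => (hcp₂.differentiable two_ne_zero x).hasDerivAt
  have hcp₀' : ContDiff ℝ 1 (deriv cp₀) := (contDiff_succ_iff_deriv.mp (h2 ▸ hcp₀)).2.2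
  have hcp₁' : ContDiff ℝ 1 (deriv cp₁) := (contDiff_succ_iff_deriv.mp (h2 ▸ hcp₁)).2.2
  have hcp₂' : ContDiff ℝ 1 (deriv cp₂) := (contDiff_succ_iff_deriv.mp (h2 ▸ hcp₂)).2.2
  have hdcp₀' : ∀ x : ℝ, HasDerivAt (deriv cp₀) (deriv (deriv cp₀) x) x :=
    fun x => (hcp₀'.differentiable one_ne_zero x).hasDerivAt
  have hdcp₁' : ∀ x : ℝ, HasDerivAt (deriv cp₁) (deriv (deriv cp₁) x) x :=
    fun x => (hcp₁'.differentiable one_ne_zero x).hasDerivAt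
  have hdcp₂' : ∀ x : ℝ, HasDerivAt (deriv cp₂) (deriv (deriv cp₂) x) x :=
    fun x => (hcp₂'.differentiable one_ne_zero x).hasDerivAt
  have hdcm₀ : ∀ x : ℝ, HasDerivAt cm₀ (deriv cm₀ x) x :=
    fun x => (hcm₀.differentiable one_ne_zero x).hasDerivAt
  have hdcm₁ : ∀ x : ℝ, HasDerivAt cm₁ (deriv cm₁ x) x :=
    fun x => (hcm₁.differentiable one_ne_zero x).hasDerivAt
  have hdc₀ : ∀ x : ℝ, HasDerivAt c₀ (deriv c₀ x) x :=
    fun x => (hc₀.differentiable one_ne_zero x).hasDerivAt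
  have hdc₁ : ∀ x : ℝ, HasDerivAt c₁ (deriv c₁ x) x :=
    fun x => (hc₁.differentiable one_ne_zero x).hasDerivAt
  have hdb₁ : ∀ x : ℝ, HasDerivAt b₁ (deriv b₁ x) x :=
    fun x => (hb₁.differentiable one_ne_zero x).hasDerivAt
  have hdα : ∀ x : ℝ, HasDerivAt α (deriv α x) x :=
    fun x => (hα.differentiable one_ne_zero x).hasDerivAt
  have hdβ : ∀ x : ℝ, HasDerivAt β (deriv β x) x :=
    fun x => (hβ.differentiable one_ne_zero x).hasDerivAt
  set F := fEdge cp₀ cp₁ cp₂ cm₀ cm₁ c₀ c₁ b₁ α β with hF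
  -- the second partial derivative, computed everywhere
  have hG : ∀ (d : ℝ × ℝ × ℝ × ℝ × ℝ) (ξ₁ x : ℝ),
      HasDerivAt (fun s => F d (ξ₁, s))
        (d.1 * (deriv cp₀ x * c₀ ξ₁
            - (deriv β x * deriv cp₀ x + β x * deriv (deriv cp₀) x) * c₁ ξ₁)
        + d.2.1 * (deriv cp₁ x * c₀ ξ₁
            - (deriv β x * deriv cp₁ x + β x * deriv (deriv cp₁) x) * c₁ ξ₁)
        + d.2.2.1 * (deriv cp₂ x * c₀ ξ₁
            - (deriv β x * deriv cp₂ x + β x * deriv (deriv cp₂) x) * c₁ ξ₁)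
        + d.2.2.2.1 * ((deriv α x * cm₀ x + α x * deriv cm₀ x) * b₁ ξ₁)
        + d.2.2.2.2 * ((deriv α x * cm₁ x + α x * deriv cm₁ x) * b₁ ξ₁)) x := by
    intro d ξ₁ x
    exact (((((((hdcp₀ x).mul_const (c₀ ξ₁)).sub
        (((hdβ x).mul (hdcp₀' x)).mul_const (c₁ ξ₁))).const_mul d.1).add
      ((((hdcp₁ x).mul_const (c₀ ξ₁)).sub
        (((hdβ x).mul (hdcp₁' x)).mul_const (c₁ ξ₁))).const_mul d.2.1)).add
      ((((hdcp₂ x).mul_const (c₀ ξ₁)).sub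
        (((hdβ x).mul (hdcp₂' x)).mul_const (c₁ ξ₁))).const_mul d.2.2.1)).add
      ((((hdα x).mul (hdcm₀ x)).mul_const (b₁ ξ₁)).const_mul d.2.2.2.1)).add
      ((((hdα x).mul (hdcm₁ x)).mul_const (b₁ ξ₁)).const_mul d.2.2.2.2)
  have hpd2 : ∀ d : ℝ × ℝ × ℝ × ℝ × ℝ, pd2 (F d) = fun ξ : ℝ × ℝ =>
        d.1 * (deriv cp₀ ξ.2 * c₀ ξ.1
            - (deriv β ξ.2 * deriv cp₀ ξ.2 + β ξ.2 * deriv (deriv cp₀) ξ.2) * c₁ ξ.1)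
        + d.2.1 * (deriv cp₁ ξ.2 * c₀ ξ.1
            - (deriv β ξ.2 * deriv cp₁ ξ.2 + β ξ.2 * deriv (deriv cp₁) ξ.2) * c₁ ξ.1)
        + d.2.2.1 * (deriv cp₂ ξ.2 * c₀ ξ.1
            - (deriv β ξ.2 * deriv cp₂ ξ.2 + β ξ.2 * deriv (deriv cp₂) ξ.2) * c₁ ξ.1)
        + d.2.2.2.1 * ((deriv α ξ.2 * cm₀ ξ.2 + α ξ.2 * deriv cm₀ ξ.2) * b₁ ξ.1)
        + d.2.2.2.2 * ((deriv α ξ.2 * cm₁ ξ.2 + α ξ.2 * deriv cm₁ ξ.2) * b₁ ξ.1) :=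
    fun d => funext fun ξ => (hG d ξ.1 ξ.2).deriv
  -- the five explicit formulas
  have key : ∀ d : ℝ × ℝ × ℝ × ℝ × ℝ,
      F d (0, 0) = d.1 ∧
      pd2 (F d) (0, 0) = d.2.1 ∧
      pd2 (pd2 (F d)) (0, 0) = d.2.2.1 ∧
      pd1 (F d) (0, 0) = lam * α 0 * d.2.2.2.1 - β 0 * d.2.1 ∧
      pd1 (pd2 (F d)) (0, 0)
        = lam * α 0 * d.2.2.2.2 - β 0 * d.2.2.1
          + lam * deriv α 0 * d.2.2.2.1 - deriv β 0 * d.2.1 := by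
    intro d
    refine ⟨?_, ?_, ?_, ?_, ?_⟩
    · show fEdge cp₀ cp₁ cp₂ cm₀ cm₁ c₀ c₁ b₁ α β d (0, 0) = d.1
      simp only [fEdge, hcp₀0, hcp₁0, hcp₂0, hcp₀1, hcp₁1, hcp₂1, hc₀0, hc₁0, hb₁0,
        hcm₀0, hcm₁0]
      ring
    · rw [hpd2 d]
      simp only [hcp₀1, hcp₁1, hcp₂1, hc₀0, hc₁0, hb₁0]
      ring
    · rw [hpd2 d]
      have heq : (fun s : ℝ =>
          (d.1 * (deriv cp₀ s * c₀ (0:ℝ)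
              - (deriv β s * deriv cp₀ s + β s * deriv (deriv cp₀) s) * c₁ (0:ℝ))
          + d.2.1 * (deriv cp₁ s * c₀ (0:ℝ)
              - (deriv β s * deriv cp₁ s + β s * deriv (deriv cp₁) s) * c₁ (0:ℝ))
          + d.2.2.1 * (deriv cp₂ s * c₀ (0:ℝ)
              - (deriv β s * deriv cp₂ s + β s * deriv (deriv cp₂) s) * c₁ (0:ℝ))
          + d.2.2.2.1 * ((deriv α s * cm₀ s + α s * deriv cm₀ s) * b₁ (0:ℝ))
          + d.2.2.2.2 * ((deriv α s * cm₁ s + α s * deriv cm₁ s) * b₁ (0:ℝ))))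
          = fun s : ℝ =>
            d.1 * deriv cp₀ s + d.2.1 * deriv cp₁ s + d.2.2.1 * deriv cp₂ s := by
        funext s
        simp only [hc₀0, hc₁0, hb₁0]
        ring
      show deriv (fun s : ℝ => _) (0:ℝ) = d.2.2.1
      rw [heq, HasDerivAt.deriv
        (f := fun s : ℝ => d.1 * deriv cp₀ s + d.2.1 * deriv cp₁ s + d.2.2.1 * deriv cp₂ s)
        (((((hdcp₀' 0).const_mul d.1).add
        ((hdcp₁' 0).const_mul d.2.1)).add ((hdcp₂' 0).const_mul d.2.2.1))),
        hcp₀2, hcp₁2, hcp₂2]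
      ring
    · have h4 : HasDerivAt (fun s => F d (s, (0:ℝ)))
          (d.1 * (cp₀ 0 * deriv c₀ 0 - β 0 * deriv cp₀ 0 * deriv c₁ 0)
          + d.2.1 * (cp₁ 0 * deriv c₀ 0 - β 0 * deriv cp₁ 0 * deriv c₁ 0)
          + d.2.2.1 * (cp₂ 0 * deriv c₀ 0 - β 0 * deriv cp₂ 0 * deriv c₁ 0)
          + d.2.2.2.1 * (α 0 * cm₀ 0 * deriv b₁ 0)
          + d.2.2.2.2 * (α 0 * cm₁ 0 * deriv b₁ 0)) 0 := by
        exact (((((((hdc₀ 0).const_mul (cp₀ 0)).sub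
            ((hdc₁ 0).const_mul (β 0 * deriv cp₀ 0))).const_mul d.1).add
          ((((hdc₀ 0).const_mul (cp₁ 0)).sub
            ((hdc₁ 0).const_mul (β 0 * deriv cp₁ 0))).const_mul d.2.1)).add
          ((((hdc₀ 0).const_mul (cp₂ 0)).sub
            ((hdc₁ 0).const_mul (β 0 * deriv cp₂ 0))).const_mul d.2.2.1)).add
          (((hdb₁ 0).const_mul (α 0 * cm₀ 0)).const_mul d.2.2.2.1)).add
          (((hdb₁ 0).const_mul (α 0 * cm₁ 0)).const_mul d.2.2.2.2)
      show deriv (fun s : ℝ => F d (s, (0:ℝ))) (0:ℝ) = _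
      rw [h4.deriv, hcp₀0, hcp₁0, hcp₂0, hcp₀1, hcp₁1, hcp₂1, hc₀1, hc₁1, hb₁1,
        hcm₀0, hcm₁0]
      ring
    · rw [hpd2 d]
      have h5 : HasDerivAt (fun s : ℝ =>
          (d.1 * (deriv cp₀ (0:ℝ) * c₀ s
              - (deriv β 0 * deriv cp₀ 0 + β 0 * deriv (deriv cp₀) 0) * c₁ s)
          + d.2.1 * (deriv cp₁ (0:ℝ) * c₀ s
              - (deriv β 0 * deriv cp₁ 0 + β 0 * deriv (deriv cp₁) 0) * c₁ s)
          + d.2.2.1 * (deriv cp₂ (0:ℝ) * c₀ s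
              - (deriv β 0 * deriv cp₂ 0 + β 0 * deriv (deriv cp₂) 0) * c₁ s)
          + d.2.2.2.1 * ((deriv α (0:ℝ) * cm₀ 0 + α 0 * deriv cm₀ 0) * b₁ s)
          + d.2.2.2.2 * ((deriv α (0:ℝ) * cm₁ 0 + α 0 * deriv cm₁ 0) * b₁ s)))
          (d.1 * (deriv cp₀ (0:ℝ) * deriv c₀ 0
              - (deriv β 0 * deriv cp₀ 0 + β 0 * deriv (deriv cp₀) 0) * deriv c₁ 0)
          + d.2.1 * (deriv cp₁ (0:ℝ) * deriv c₀ 0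
              - (deriv β 0 * deriv cp₁ 0 + β 0 * deriv (deriv cp₁) 0) * deriv c₁ 0)
          + d.2.2.1 * (deriv cp₂ (0:ℝ) * deriv c₀ 0
              - (deriv β 0 * deriv cp₂ 0 + β 0 * deriv (deriv cp₂) 0) * deriv c₁ 0)
          + d.2.2.2.1 * ((deriv α (0:ℝ) * cm₀ 0 + α 0 * deriv cm₀ 0) * deriv b₁ 0)
          + d.2.2.2.2 * ((deriv α (0:ℝ) * cm₁ 0 + α 0 * deriv cm₁ 0) * deriv b₁ 0)) 0 := by
        exact (((((((hdc₀ 0).const_mul (deriv cp₀ 0)).sub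
            ((hdc₁ 0).const_mul _)).const_mul d.1).add
          ((((hdc₀ 0).const_mul (deriv cp₁ 0)).sub
            ((hdc₁ 0).const_mul _)).const_mul d.2.1)).add
          ((((hdc₀ 0).const_mul (deriv cp₂ 0)).sub
            ((hdc₁ 0).const_mul _)).const_mul d.2.2.1)).add
          (((hdb₁ 0).const_mul _).const_mul d.2.2.2.1)).add
          (((hdb₁ 0).const_mul _).const_mul d.2.2.2.2)
      show deriv (fun s : ℝ => _) (0:ℝ) = _
      rw [h5.deriv, hcp₀1, hcp₁1, hcp₂1, hcp₀2, hcp₁2, hcp₂2, hc₀1, hc₁1, hb₁1,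
        hcm₀0, hcm₁0, hcm₀1, hcm₁1]
      ring
  refine ⟨key, ?_⟩
  -- unique solvability
  have hla : lam * α 0 ≠ 0 := mul_ne_zero hlam hα0
  have hED : ∀ d : ℝ × ℝ × ℝ × ℝ × ℝ, edgeData (F d)
      = (d.1, d.2.1, d.2.2.1, lam * α 0 * d.2.2.2.1 - β 0 * d.2.1,
          lam * α 0 * d.2.2.2.2 - β 0 * d.2.2.1
            + lam * deriv α 0 * d.2.2.2.1 - deriv β 0 * d.2.1) := by
    intro d
    obtain ⟨k1, k2, k3, k4, k5⟩ := key d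
    simp only [edgeData, k1, k2, k3, k4, k5]
  intro w
  obtain ⟨w1, w2, w3, w4, w5⟩ := w
  set A : ℝ := (w4 + β 0 * w2) / (lam * α 0) with hA
  set B : ℝ := (w5 + β 0 * w3 - lam * deriv α 0 * A + deriv β 0 * w2) / (lam * α 0) with hB
  refine ⟨(w1, w2, w3, A, B), ?_, ?_⟩
  · show edgeData (F (w1, w2, w3, A, B)) = (w1, w2, w3, w4, w5)
    rw [hED]
    simp only [Prod.mk.injEq]
    refine ⟨trivial, trivial, trivial, ?_, ?_⟩
    · rw [hA]; field_simp; ring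
    · rw [hB, hA]; field_simp; ring
  · rintro ⟨y1, y2, y3, y4, y5⟩ hy
    rw [hED] at hy
    simp only [Prod.mk.injEq] at hy
    obtain ⟨e1, e2, e3, e4, e5⟩ := hy
    subst e1 e2 e3
    have hy4 : y4 = A := by
      rw [hA]; field_simp; linarith
    subst hy4
    have hy5 : y5 = B := by
      rw [hB]; field_simp; linarith
    subst hy5
    rfl
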